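/- Let P ⊆ S^{N−1} be a finite root system in ℝ^N (N ≥ 1) satisfying condition (EA), let ρ ≥ 0 and 0 < r, R. Then there exists a constant c > 0, depending only on N, P, ρ, r and R, such that for every open set Ω ⊆ ℝ^N satisfying the reflection property (RP) with respect to P and ρ, containing the open ball 𝔅_r of radius σ1(P)⁻¹σ2(P)(ρ + 2r) about the origin, and contained in B(0, R), one has λ({x ∈ ℝ^N : 0 < dist(x, Ω) < s}) ≤ c·s for all s ∈ (0, r), where λ denotes Lebesgue measure and dist(x, Ω) the Euclidean distance from x to Ω. -/

import Mathlib

open scoped RealInnerProductSpace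
open Metric Set MeasureTheory

noncomputable section

abbrev E (N : ℕ) := EuclideanSpace ℝ (Fin N)

variable {N : ℕ}

/-- Reflection across the hyperplane `Π_p(s) = {x | x·p = s}`. -/
def reflect (p : E N) (s : ℝ) (x : E N) : E N := x - (2 * (⟪x, p⟫ - s)) • p

/-- Reflection across the hyperplane through the origin orthogonal to `p`. -/
def reflect0 (p : E N) : E N → E N := reflect p 0

/-- A finite root system of unit vectors. -/
def IsRootSystem (P : Set (E N)) : Prop :=
  P.Finite ∧ (∀ p ∈ P, ‖p‖ = 1) ∧
  (∀ p ∈ P, {q | q ∈ P ∧ ∃ c : ℝ, q = c • p} = {p, -p}) ∧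
  (∀ p ∈ P, reflect0 p '' P = P)

/-- Condition (EA): for every hyperplane through the origin (with normal `v ≠ 0`),
the part of `P` outside the hyperplane spans `ℝ^N`. -/
def CondEA (P : Set (E N)) : Prop :=
  ∀ v : E N, v ≠ 0 → Submodule.span ℝ {p | p ∈ P ∧ ⟪p, v⟫ ≠ 0} = ⊤

/-- The reflection property (RP) with respect to `P` and `ρ`. -/
def ReflProp (P : Set (E N)) (ρ : ℝ) (Ω : Set (E N)) : Prop :=
  ∀ p ∈ P, ∀ s > ρ,
    reflect p s '' Ω ∩ {x | ⟪x, p⟫ < s} ⊆ Ω ∩ {x | ⟪x, p⟫ < s}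

/-- `v` enumerates a basis of `ℝ^N` consisting of elements of `P`. -/
def BasisIn (P : Set (E N)) (v : Fin N → E N) : Prop :=
  (∀ i, v i ∈ P) ∧ LinearIndependent ℝ v ∧ Submodule.span ℝ (Set.range v) = ⊤

/-- The open cone `Co_r(A)` generated by a basis. -/
def Cone (r : ℝ) (v : Fin N → E N) : Set (E N) :=
  {x | ∃ a : Fin N → ℝ, (∀ i, 0 < a i) ∧ (∑ i, a i) < r ∧ x = ∑ i, a i • v i}

/-- `σ₁(P)`. -/
def sigma1 (P : Set (E N)) : ℝ :=
  sInf {s | ∃ p₁ ∈ P, s = sSup {t | ∃ v : Fin N → E N, BasisIn P v ∧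
    t = sInf (Set.range fun i => |⟪v i, p₁⟫|)}}

/-- `σ₂(P)`. -/
def sigma2 (P : Set (E N)) : ℝ :=
  sSup {t | ∃ x : E N, (∀ p ∈ P, |⟪p, x⟫| ≤ 1) ∧ t = ‖x‖}

/-- `σ₃(P)`. -/
def sigma3 (P : Set (E N)) : ℝ :=
  sInf {s | ∃ v : Fin N → E N, BasisIn P v ∧
    s = sSup {r | 0 < r ∧ ball ((1 / (2 * (N : ℝ))) • ∑ i, v i) r ⊆ Cone 1 v}}


-- ============ auxiliary lemmas =============

lemma refl_down {P : Set (E N)} {ρ : ℝ} {Ω : Set (E N)} (hRP : ReflProp P ρ Ω)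
    {p : E N} (hp : p ∈ P) (hpn : ‖p‖ = 1) {ω : E N} (hω : ω ∈ Ω) {t : ℝ}
    (ht : 0 < t) (ht2 : t < 2 * (⟪ω, p⟫ - ρ)) : ω - t • p ∈ Ω := by
  have hpp : ⟪p, p⟫ = (1 : ℝ) := by
    have h := real_inner_self_eq_norm_mul_norm p
    rw [hpn] at h; simpa using h
  have hsρ : ⟪ω, p⟫ - t / 2 > ρ := by linarith
  have h1 : reflect p (⟪ω, p⟫ - t / 2) ω = ω - t • p := by
    unfold reflect
    have : (2 * (⟪ω, p⟫ - (⟪ω, p⟫ - t / 2))) = t := by ring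
    rw [this]
  have h2 : ⟪ω - t • p, p⟫ < ⟪ω, p⟫ - t / 2 := by
    rw [inner_sub_left, real_inner_smul_left, hpp]
    linarith
  exact (hRP p hp _ hsρ ⟨⟨ω, hω, h1⟩, h2⟩).1

lemma cone_sub {P : Set (E N)} {ρ : ℝ} {Ω : Set (E N)} (hRP : ReflProp P ρ Ω)
    (hunit : ∀ p ∈ P, ‖p‖ = 1) (u : Fin N → E N) (hu : ∀ i, u i ∈ P)
    (t : Fin N → ℝ) (ht : ∀ i, 0 ≤ t i) :
    ∀ (F : Finset (Fin N)) (ω : E N), ω ∈ Ω →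
      (∀ j ∈ F, ρ + ∑ i ∈ F, t i < ⟪ω, u j⟫) →
      ω - ∑ i ∈ F, t i • u i ∈ Ω := by
  classical
  intro F
  induction F using Finset.induction with
  | empty => intro ω hω _; simpa using hω
  | @insert i F' hi IH =>
    intro ω hω hin
    have hsum : ∑ j ∈ insert i F', t j = t i + ∑ j ∈ F', t j := Finset.sum_insert hi
    have hsum' : ∑ j ∈ insert i F', t j • u j = t i • u i + ∑ j ∈ F', t j • u j :=
      Finset.sum_insert hi
    have hF'nonneg : (0:ℝ) ≤ ∑ j ∈ F', t j := Finset.sum_nonneg fun j _ => ht j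
    rcases eq_or_lt_of_le (ht i) with h0 | h0
    · -- t i = 0
      have : ω - ∑ j ∈ insert i F', t j • u j = ω - ∑ j ∈ F', t j • u j := by
        rw [hsum', ← h0]; simp
      rw [this]
      apply IH ω hω
      intro j hj
      have := hin j (Finset.mem_insert_of_mem hj)
      rw [hsum, ← h0] at this; simpa using this
    · -- 0 < t i
      have hωi := hin i (Finset.mem_insert_self i F')
      rw [hsum] at hωi
      have hω' : ω - t i • u i ∈ Ω := by
        apply refl_down hRP (hu i) (hunit _ (hu i)) hω h0
        linarith
      have hrw : ω - ∑ j ∈ insert i F', t j • u j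
          = (ω - t i • u i) - ∑ j ∈ F', t j • u j := by
        rw [hsum']; abel
      rw [hrw]
      apply IH _ hω'
      intro j hj
      have hj' := hin j (Finset.mem_insert_of_mem hj)
      rw [hsum] at hj'
      have hinner : ⟪ω - t i • u i, u j⟫ = ⟪ω, u j⟫ - t i * ⟪u i, u j⟫ := by
        rw [inner_sub_left, real_inner_smul_left]
      have hbd : ⟪u i, u j⟫ ≤ 1 := by
        have := real_inner_le_norm (u i) (u j)
        rw [hunit _ (hu i), hunit _ (hu j)] at this; linarith
      have : t i * ⟪u i, u j⟫ ≤ t i := by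
        nlinarith [ht i]
      rw [hinner]; linarith

lemma nontrivE (hN : 1 ≤ N) : Nontrivial (E N) :=
  Module.nontrivial_of_finrank_pos (R := ℝ) (by rw [finrank_euclideanSpace_fin]; omega)

lemma neg_mem_of_mem {P : Set (E N)} (hP : IsRootSystem P) {p : E N} (hp : p ∈ P) :
    -p ∈ P := by
  have h := hP.2.2.1 p hp
  have hmem : -p ∈ ({p, -p} : Set (E N)) := by simp
  rw [← h] at hmem
  exact hmem.1

lemma reflect0_mem {P : Set (E N)} (hP : IsRootSystem P) {p q : E N} (hp : p ∈ P)
    (hq : q ∈ P) : reflect0 p q ∈ P := by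
  have h := hP.2.2.2 p hp
  rw [← h]
  exact ⟨q, hq, rfl⟩

lemma spanP (hN : 1 ≤ N) {P : Set (E N)} (hEA : CondEA P) :
    Submodule.span ℝ P = ⊤ := by
  haveI := nontrivE (N := N) hN
  obtain ⟨v, hv⟩ := exists_ne (0 : E N)
  have h := hEA v hv
  rw [eq_top_iff, ← h]
  exact Submodule.span_mono fun p hp => hp.1

lemma P_nonempty (hN : 1 ≤ N) {P : Set (E N)} (hEA : CondEA P) : P.Nonempty := by
  haveI := nontrivE (N := N) hN
  by_contra h
  rw [Set.not_nonempty_iff_eq_empty] at h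
  have h2 : Submodule.span ℝ (P : Set (E N)) = ⊤ := spanP hN hEA
  rw [h, Submodule.span_empty] at h2
  exact absurd h2 bot_ne_top

lemma extract_basis {G : Set (E N)} (hspan : Submodule.span ℝ G = ⊤) :
    ∃ u : Fin N → E N, (∀ i, u i ∈ G) ∧ LinearIndependent ℝ u ∧
      Submodule.span ℝ (Set.range u) = ⊤ := by
  classical
  obtain ⟨b, hbG, hbspan, hbind⟩ := exists_linearIndependent ℝ G
  have hbfin : b.Finite := hbind.setFinite
  haveI := hbfin.fintype
  have hcard : Fintype.card b = N := by
    have h1 : Module.finrank ℝ (Submodule.span ℝ b) = b.toFinset.card :=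
      finrank_span_set_eq_card hbind
    rw [hbspan, hspan, finrank_top, finrank_euclideanSpace_fin, Set.toFinset_card] at h1
    omega
  let e := Fintype.equivFinOfCardEq hcard
  have hrange : Set.range (fun i => ((e.symm i : b) : E N)) = b := by
    have h1 : (fun i => ((e.symm i : b) : E N)) = Subtype.val ∘ e.symm := rfl
    rw [h1, Set.range_comp, e.symm.surjective.range_eq, Set.image_univ, Subtype.range_coe]
  refine ⟨fun i => ((e.symm i : b) : E N), fun i => hbG (e.symm i).2, ?_, ?_⟩
  · exact hbind.comp e.symm e.symm.injective
  · rw [hrange, hbspan, hspan]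

/-- The inner set of `sigma1`. -/
def Tset (P : Set (E N)) (p₁ : E N) : Set ℝ :=
  {t | ∃ v : Fin N → E N, BasisIn P v ∧ t = sInf (Set.range fun i => |⟪v i, p₁⟫|)}

lemma sigma1_eq (P : Set (E N)) :
    sigma1 P = sInf {s | ∃ p₁ ∈ P, s = sSup (Tset P p₁)} := rfl

lemma Tset_subset (hN : 1 ≤ N) {P : Set (E N)} (p : E N) :
    Tset P p ⊆ (fun q => |⟪q, p⟫|) '' P := by
  haveI : Nonempty (Fin N) := Fin.pos_iff_nonempty.1 (by omega)
  rintro t ⟨v, hv, rfl⟩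
  have hmem : sInf (Set.range fun i => |⟪v i, p⟫|) ∈ Set.range fun i => |⟪v i, p⟫| :=
    Set.Nonempty.csInf_mem (Set.range_nonempty _) (Set.finite_range _)
  obtain ⟨i, hi⟩ := hmem
  exact ⟨v i, hv.1 i, hi⟩

lemma Tset_finite (hN : 1 ≤ N) {P : Set (E N)} (hP : IsRootSystem P) (p : E N) : (Tset P p).Finite :=
  (hP.1.image _).subset (Tset_subset hN p)

lemma Tset_nonempty (hN : 1 ≤ N) {P : Set (E N)} (hEA : CondEA P) (p : E N) : (Tset P p).Nonempty := by
  obtain ⟨u, hu1, hu2, hu3⟩ := extract_basis (spanP hN hEA)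
  exact ⟨_, ⟨u, ⟨hu1, hu2, hu3⟩, rfl⟩⟩

lemma Tset_nonneg {P : Set (E N)} (p : E N) : ∀ t ∈ Tset P p, 0 ≤ t := by
  rintro t ⟨v, hv, rfl⟩
  exact Real.sInf_nonneg (by rintro y ⟨i, rfl⟩; positivity)

lemma Tset_le_one (hN : 1 ≤ N) {P : Set (E N)} (hP : IsRootSystem P) (p : E N) (hp : p ∈ P) : ∀ t ∈ Tset P p, t ≤ 1 := by
  haveI : Nonempty (Fin N) := Fin.pos_iff_nonempty.1 (by omega)
  rintro t ⟨v, hv, rfl⟩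
  obtain ⟨i⟩ := (inferInstance : Nonempty (Fin N))
  have h1 : sInf (Set.range fun i => |⟪v i, p⟫|) ≤ |⟪v i, p⟫| :=
    csInf_le (Set.finite_range _).bddBelow ⟨i, rfl⟩
  have h2 : |⟪v i, p⟫| ≤ 1 := by
    have := abs_real_inner_le_norm (v i) p
    rw [hP.2.1 _ (hv.1 i), hP.2.1 _ hp] at this
    linarith
  linarith

lemma Sset_eq {P : Set (E N)} : {s | ∃ p₁ ∈ P, s = sSup (Tset P p₁)}
    = (fun p => sSup (Tset P p)) '' P := by
  ext s
  simp only [Set.mem_setOf_eq, Set.mem_image]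
  constructor
  · rintro ⟨p, hp, rfl⟩; exact ⟨p, hp, rfl⟩
  · rintro ⟨p, hp, rfl⟩; exact ⟨p, hp, rfl⟩

lemma Sset_bddBelow {P : Set (E N)} : BddBelow {s | ∃ p₁ ∈ P, s = sSup (Tset P p₁)} := by
  refine ⟨0, ?_⟩
  rintro s ⟨p, hp, rfl⟩
  exact Real.sSup_nonneg (Tset_nonneg p)

lemma sigma1_le_sSup {P : Set (E N)} (p : E N) (hp : p ∈ P) : sigma1 P ≤ sSup (Tset P p) := by
  rw [sigma1_eq]
  exact csInf_le (Sset_bddBelow) ⟨p, hp, rfl⟩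

lemma sigma1_pos (hN : 1 ≤ N) {P : Set (E N)} (hP : IsRootSystem P) (hEA : CondEA P) : 0 < sigma1 P := by
  haveI : Nonempty (Fin N) := Fin.pos_iff_nonempty.1 (by omega)
  have hSne : {s | ∃ p₁ ∈ P, s = sSup (Tset P p₁)}.Nonempty := by
    obtain ⟨p, hp⟩ := P_nonempty hN hEA
    exact ⟨_, p, hp, rfl⟩
  have hSfin : {s | ∃ p₁ ∈ P, s = sSup (Tset P p₁)}.Finite := by
    rw [Sset_eq]; exact hP.1.image _
  have hmem : sigma1 P ∈ {s | ∃ p₁ ∈ P, s = sSup (Tset P p₁)} := by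
    rw [sigma1_eq]; exact Set.Nonempty.csInf_mem hSne hSfin
  obtain ⟨q, hq, hqeq⟩ := hmem
  have hq0 : q ≠ 0 := by
    intro h
    have := hP.2.1 q hq
    rw [h, norm_zero] at this; norm_num at this
  obtain ⟨u, hu1, hu2, hu3⟩ := extract_basis (hEA q hq0)
  set t₀ := sInf (Set.range fun i => |⟪u i, q⟫|) with ht₀
  have ht₀mem : t₀ ∈ Set.range fun i => |⟪u i, q⟫| :=
    Set.Nonempty.csInf_mem (Set.range_nonempty _) (Set.finite_range _)
  have ht₀pos : 0 < t₀ := by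
    obtain ⟨i, hi⟩ := ht₀mem
    rw [← hi]
    exact abs_pos.2 (hu1 i).2
  have ht₀T : t₀ ∈ Tset P q := ⟨u, ⟨fun i => (hu1 i).1, hu2, hu3⟩, rfl⟩
  have : t₀ ≤ sSup (Tset P q) := le_csSup (Tset_finite hN hP q).bddAbove ht₀T
  rw [hqeq]; linarith

lemma sigma1_le_one (hN : 1 ≤ N) {P : Set (E N)} (hP : IsRootSystem P) (hEA : CondEA P) : sigma1 P ≤ 1 := by
  obtain ⟨p, hp⟩ := P_nonempty hN hEA
  have h1 : sigma1 P ≤ sSup (Tset P p) := sigma1_le_sSup p hp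
  have h2 : sSup (Tset P p) ≤ 1 :=
    csSup_le (Tset_nonempty hN hEA p) (Tset_le_one hN hP p hp)
  linarith

lemma sigma1_basis (hN : 1 ≤ N) {P : Set (E N)} (hP : IsRootSystem P) (hEA : CondEA P) (p : E N) (hp : p ∈ P) :
    ∃ v : Fin N → E N, BasisIn P v ∧ ∀ i, sigma1 P ≤ |⟪v i, p⟫| := by
  have hmem : sSup (Tset P p) ∈ Tset P p :=
    Set.Nonempty.csSup_mem (Tset_nonempty hN hEA p) (Tset_finite hN hP p)
  obtain ⟨v, hv, heq⟩ := hmem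
  refine ⟨v, hv, fun i => ?_⟩
  have h1 : sInf (Set.range fun i => |⟪v i, p⟫|) ≤ |⟪v i, p⟫| :=
    csInf_le (Set.finite_range _).bddBelow ⟨i, rfl⟩
  have h2 := sigma1_le_sSup (P := P) p hp
  rw [heq] at h2
  linarith

lemma sigma2_bddAbove (hN : 1 ≤ N) {P : Set (E N)} (hEA : CondEA P) :
    BddAbove {t | ∃ x : E N, (∀ p ∈ P, |⟪p, x⟫| ≤ 1) ∧ t = ‖x‖} := by
  obtain ⟨u, hu1, hu2, hu3⟩ := extract_basis (spanP hN hEA)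
  set L : E N →ₗ[ℝ] (Fin N → ℝ) :=
    LinearMap.pi (fun j => ((innerSL ℝ (u j)).toLinearMap)) with hL
  have hker : LinearMap.ker L = ⊥ := by
    rw [LinearMap.ker_eq_bot']
    intro x hx
    have hx' : ∀ j, ⟪u j, x⟫ = 0 := by
      intro j
      have := congrFun hx j
      simpa [hL] using this
    have hxmem : x ∈ Submodule.span ℝ (Set.range u) := by rw [hu3]; trivial
    rw [Submodule.mem_span_range_iff_exists_fun] at hxmem
    obtain ⟨c, hc⟩ := hxmem
    have hxx : ⟪x, x⟫ = (0 : ℝ) := by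
      calc ⟪x, x⟫ = ⟪∑ i, c i • u i, x⟫ := by rw [hc]
        _ = ∑ i, c i * ⟪u i, x⟫ := by
            rw [sum_inner]
            exact Finset.sum_congr rfl fun j _ => real_inner_smul_left _ _ _
        _ = 0 := Finset.sum_eq_zero fun j _ => by rw [hx' j, mul_zero]
    exact inner_self_eq_zero.1 hxx
  obtain ⟨K, hK0, hKa⟩ := LinearMap.exists_antilipschitzWith L hker
  refine ⟨K, ?_⟩
  rintro t ⟨x, hx, rfl⟩
  have h1 : ‖x‖ ≤ K * ‖L x‖ := by
    have := hKa.le_mul_dist x 0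
    simpa [dist_eq_norm] using this
  have h2 : ‖L x‖ ≤ 1 := by
    apply pi_norm_le_iff_of_nonneg zero_le_one |>.2
    intro j
    have : |⟪u j, x⟫| ≤ 1 := hx _ (hu1 j)
    simpa [hL, Real.norm_eq_abs] using this
  calc ‖x‖ ≤ K * ‖L x‖ := h1
    _ ≤ K * 1 := by
        apply mul_le_mul_of_nonneg_left h2 (by positivity)
    _ = K := mul_one _

lemma sigma2_ge_one (hN : 1 ≤ N) {P : Set (E N)} (hP : IsRootSystem P) (hEA : CondEA P) : 1 ≤ sigma2 P := by
  obtain ⟨p₀, hp₀⟩ := P_nonempty hN hEA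
  apply le_csSup (sigma2_bddAbove hN hEA)
  refine ⟨p₀, fun p hp => ?_, (hP.2.1 p₀ hp₀).symm⟩
  have := abs_real_inner_le_norm p p₀
  rw [hP.2.1 p hp, hP.2.1 p₀ hp₀] at this
  linarith

lemma norm_le_sigma2_mul (hN : 1 ≤ N) {P : Set (E N)} (hP : IsRootSystem P) (hEA : CondEA P) {x : E N} {M : ℝ} (hM : 0 < M)
    (hup : ∀ p ∈ P, ⟪p, x⟫ ≤ M) : ‖x‖ ≤ sigma2 P * M := by
  have hfeas : ∀ p ∈ P, |⟪p, M⁻¹ • x⟫| ≤ 1 := by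
    intro p hp
    have h1 : ⟪p, x⟫ ≤ M := hup p hp
    have h2 : -⟪p, x⟫ ≤ M := by
      have := hup (-p) (neg_mem_of_mem hP hp)
      rwa [inner_neg_left] at this
    have habs : |⟪p, x⟫| ≤ M := abs_le.2 ⟨by linarith, h1⟩
    rw [real_inner_smul_right, abs_mul, abs_inv, abs_of_pos hM]
    calc M⁻¹ * |⟪p, x⟫| ≤ M⁻¹ * M := by
          apply mul_le_mul_of_nonneg_left habs (by positivity)
      _ = 1 := inv_mul_cancel₀ hM.ne'
  have hmem : ‖M⁻¹ • x‖ ≤ sigma2 P :=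
    le_csSup (sigma2_bddAbove hN hEA) ⟨M⁻¹ • x, hfeas, rfl⟩
  rw [norm_smul, norm_inv, Real.norm_eq_abs, abs_of_pos hM] at hmem
  calc ‖x‖ = M * (M⁻¹ * ‖x‖) := by field_simp
    _ ≤ M * sigma2 P := mul_le_mul_of_nonneg_left hmem hM.le
    _ = sigma2 P * M := mul_comm _ _

lemma claimH (hN : 1 ≤ N) {P : Set (E N)} (hP : IsRootSystem P) (hEA : CondEA P)
    {ρ r : ℝ} (hρ : 0 ≤ ρ) (hr : 0 < r) {x : E N}
    (hx : (sigma1 P)⁻¹ * sigma2 P * (ρ + 2 * r) ≤ ‖x‖) :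
    ∃ u : Fin N → E N, (∀ i, u i ∈ P) ∧ LinearIndependent ℝ u ∧
      ∀ i, ρ + 2 * r ≤ ⟪u i, x⟫ := by
  classical
  haveI := nontrivE (N := N) hN
  have hσ1pos : 0 < sigma1 P := sigma1_pos hN hP hEA
  have hσ1le1 : sigma1 P ≤ 1 := sigma1_le_one hN hP hEA
  have hσ2ge1 : 1 ≤ sigma2 P := sigma2_ge_one hN hP hEA
  have hρ2r : 0 < ρ + 2 * r := by linarith
  have hx0 : x ≠ 0 := by
    intro h
    rw [h, norm_zero] at hx
    have h1 : 0 < (sigma1 P)⁻¹ * sigma2 P * (ρ + 2 * r) := by positivity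
    linarith
  -- maximizer
  have hPfin := hP.1
  have hPne : P.Nonempty := P_nonempty hN hEA
  obtain ⟨p₁, hp₁F, hmax⟩ := Finset.exists_max_image hPfin.toFinset
    (fun p => ⟪p, x⟫) (hPfin.toFinset_nonempty.2 hPne)
  have hp₁ : p₁ ∈ P := hPfin.mem_toFinset.1 hp₁F
  set M : ℝ := ⟪p₁, x⟫ with hM
  have hMmax : ∀ p ∈ P, ⟪p, x⟫ ≤ M := fun p hp => hmax p (hPfin.mem_toFinset.2 hp)
  have hMpos : 0 < M := by
    have hspan := hEA x hx0
    have hne : {p | p ∈ P ∧ ⟪p, x⟫ ≠ 0}.Nonempty := by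
      by_contra h
      rw [Set.not_nonempty_iff_eq_empty] at h
      rw [h, Submodule.span_empty] at hspan
      exact absurd hspan bot_ne_top
    obtain ⟨p', hp'P, hp'x⟩ := hne
    have h1 : ⟪p', x⟫ ≤ M := hMmax p' hp'P
    have h2 : -⟪p', x⟫ ≤ M := by
      have := hMmax (-p') (neg_mem_of_mem hP hp'P)
      rwa [inner_neg_left] at this
    rcases lt_or_gt_of_ne hp'x with h | h
    · linarith
    · linarith
  have hMx : ‖x‖ ≤ sigma2 P * M := norm_le_sigma2_mul hN hP hEA hMpos hMmax
  have hσ2pos : 0 < sigma2 P := by linarith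
  have hθ : ρ + 2 * r ≤ sigma1 P * M := by
    have h1 : (sigma1 P)⁻¹ * sigma2 P * (ρ + 2 * r) ≤ sigma2 P * M := le_trans hx hMx
    have h2 : sigma2 P * ((sigma1 P)⁻¹ * (ρ + 2 * r)) ≤ sigma2 P * M := by
      calc sigma2 P * ((sigma1 P)⁻¹ * (ρ + 2 * r))
          = (sigma1 P)⁻¹ * sigma2 P * (ρ + 2 * r) := by ring
        _ ≤ sigma2 P * M := h1
    have h3 : (sigma1 P)⁻¹ * (ρ + 2 * r) ≤ M := le_of_mul_le_mul_left h2 hσ2pos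
    calc ρ + 2 * r = sigma1 P * ((sigma1 P)⁻¹ * (ρ + 2 * r)) := by field_simp
      _ ≤ sigma1 P * M := mul_le_mul_of_nonneg_left h3 hσ1pos.le
  set θ : ℝ := sigma1 P * M with hθdef
  have hθpos : 0 < θ := by positivity
  obtain ⟨v, hvB, hvσ⟩ := sigma1_basis hN hP hEA p₁ hp₁
  set w : Fin N → E N := fun i => if 0 ≤ ⟪v i, p₁⟫ then v i else -(v i) with hw
  have hw_mem : ∀ i, w i ∈ P := by
    intro i; rw [hw]; dsimp only
    split_ifs
    · exact hvB.1 i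
    · exact neg_mem_of_mem hP (hvB.1 i)
  have hw_in : ∀ i, sigma1 P ≤ ⟪w i, p₁⟫ := by
    intro i; rw [hw]; dsimp only
    split_ifs with h
    · have := hvσ i; rwa [abs_of_nonneg h] at this
    · have := hvσ i
      rw [abs_of_neg (not_le.1 h)] at this
      rwa [inner_neg_left]
  have hw_span : Submodule.span ℝ (Set.range w) = ⊤ := by
    rw [eq_top_iff, ← hvB.2.2]
    apply Submodule.span_le.2
    rintro _ ⟨i, rfl⟩
    have hmem : w i ∈ Submodule.span ℝ (Set.range w) :=
      Submodule.subset_span (Set.mem_range_self i)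
    by_cases h : 0 ≤ ⟪v i, p₁⟫
    · have hwi : w i = v i := by rw [hw]; simp only; rw [if_pos h]
      rwa [hwi] at hmem
    · have hwi : w i = -(v i) := by rw [hw]; simp only; rw [if_neg h]
      have h2 := Submodule.neg_mem _ hmem
      rwa [hwi, neg_neg] at h2
  set g : Fin N → E N := fun i => (2 * ⟪w i, p₁⟫) • p₁ - w i with hg
  have hg_mem : ∀ i, g i ∈ P := by
    intro i
    have h1 : g i = -(reflect0 p₁ (w i)) := by
      rw [hg]; dsimp only
      unfold reflect0 reflect
      rw [sub_zero]
      abel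
    rw [h1]
    exact neg_mem_of_mem hP (reflect0_mem hP hp₁ (hw_mem i))
  have hg_in : ∀ i, ⟪w i, x⟫ < θ → θ ≤ ⟪g i, x⟫ := by
    intro i hlt
    have h1 : ⟪g i, x⟫ = 2 * ⟪w i, p₁⟫ * M - ⟪w i, x⟫ := by
      rw [hg]; dsimp only
      rw [inner_sub_left, real_inner_smul_left, hM]
    rw [h1]
    have h2 : 2 * (sigma1 P) * M ≤ 2 * ⟪w i, p₁⟫ * M := by
      have := hw_in i
      nlinarith
    rw [hθdef] at hlt ⊢
    nlinarith
  set G : Set (E N) := {q | q ∈ P ∧ θ ≤ ⟪q, x⟫} with hG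
  have hp₁G : p₁ ∈ G := by
    refine ⟨hp₁, ?_⟩
    rw [hθdef]
    nlinarith
  have hGspan : Submodule.span ℝ G = ⊤ := by
    rw [eq_top_iff, ← hw_span]
    apply Submodule.span_le.2
    rintro _ ⟨i, rfl⟩
    by_cases hc : θ ≤ ⟪w i, x⟫
    · exact Submodule.subset_span ⟨hw_mem i, hc⟩
    · have hgi : g i ∈ G := ⟨hg_mem i, hg_in i (not_le.1 hc)⟩
      have h1 : w i = (2 * ⟪w i, p₁⟫) • p₁ - g i := by
        rw [hg]; dsimp only; abel
      rw [h1]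
      exact Submodule.sub_mem _
        (Submodule.smul_mem _ _ (Submodule.subset_span hp₁G))
        (Submodule.subset_span hgi)
  obtain ⟨u, huG, huind, _⟩ := extract_basis hGspan
  exact ⟨u, fun i => (huG i).1, huind, fun i => le_trans hθ (huG i).2⟩

lemma coordBound {u : Fin N → E N} (hN : 1 ≤ N) (hu : LinearIndependent ℝ u) :
    ∃ C : ℝ, 1 ≤ C ∧ ∀ (d : Fin N → ℝ), ∀ i, |d i| ≤ C * ‖∑ j, d j • u j‖ := by
  classical
  haveI : Nonempty (Fin N) := Fin.pos_iff_nonempty.1 (by omega)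
  have hcard : Fintype.card (Fin N) = Module.finrank ℝ (E N) := by
    rw [Fintype.card_fin, finrank_euclideanSpace_fin]
  let B : Module.Basis (Fin N) ℝ (E N) := basisOfLinearIndependentOfCardEqFinrank hu hcard
  have hB : ⇑B = u := coe_basisOfLinearIndependentOfCardEqFinrank hu hcard
  set L : Fin N → (E N) →L[ℝ] ℝ :=
    fun i => LinearMap.toContinuousLinearMap (B.coord i) with hL
  set C : ℝ := 1 + ∑ i, ‖L i‖ with hC
  have hC1 : 1 ≤ C := by
    rw [hC]
    have : (0:ℝ) ≤ ∑ i, ‖L i‖ := Finset.sum_nonneg fun i _ => norm_nonneg _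
    linarith
  refine ⟨C, hC1, fun d i => ?_⟩
  have hrepr : B.coord i (∑ j, d j • u j) = d i := by
    have h1 : (∑ j, d j • u j) = ∑ j, d j • B j := by rw [hB]
    rw [h1, map_sum]
    have h2 : ∀ j, B.coord i (d j • B j) = d j * (if j = i then 1 else 0) := by
      intro j
      rw [LinearMap.map_smul, smul_eq_mul, Module.Basis.coord_apply, Module.Basis.repr_self]
      simp [Finsupp.single_apply]
    rw [Finset.sum_congr rfl fun j _ => h2 j]
    simp
  have hnorm : |B.coord i (∑ j, d j • u j)| ≤ ‖L i‖ * ‖∑ j, d j • u j‖ := by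
    have := (L i).le_opNorm (∑ j, d j • u j)
    simpa [hL, Real.norm_eq_abs] using this
  rw [hrepr] at hnorm
  have hLC : ‖L i‖ ≤ C := by
    rw [hC]
    have h1 : ‖L i‖ ≤ ∑ j, ‖L j‖ :=
      Finset.single_le_sum (fun j _ => norm_nonneg (L j)) (Finset.mem_univ i)
    linarith
  calc |d i| ≤ ‖L i‖ * ‖∑ j, d j • u j‖ := hnorm
    _ ≤ C * ‖∑ j, d j • u j‖ := by
        apply mul_le_mul_of_nonneg_right hLC (norm_nonneg _)
set_option maxHeartbeats 1000000 in
lemma core_bound (hN : 1 ≤ N) {P : Set (E N)} {ρ r R : ℝ} {Ω : Set (E N)}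
    (hRP : ReflProp P ρ Ω) (hΩR : Ω ⊆ ball (0 : E N) R) (hΩne : Ω.Nonempty)
    (hunit : ∀ p ∈ P, ‖p‖ = 1) (hρ : 0 ≤ ρ) (hr : 0 < r)
    {u : Fin N → E N} (hu : ∀ i, u i ∈ P)
    {C : ℝ} (hC1 : 1 ≤ C)
    (hcoord : ∀ (d : Fin N → ℝ), ∀ i, |d i| ≤ C * ‖∑ j, d j • u j‖)
    (hrepr : ∀ z : E N, ∃ d : Fin N → ℝ, z = ∑ j, d j • u j)
    {s : ℝ} (hs0 : 0 < s) (hsr : s < r) :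
    volume {x : E N | (0 < infDist x Ω ∧ infDist x Ω < s) ∧ ∀ i, ρ + 2 * r ≤ ⟪u i, x⟫}
      ≤ ENNReal.ofReal
        (4 * N * C * (volume (ball (0 : E N) (R + 2 * r))).toReal / r * s) := by
  classical
  have hN1 : (1 : ℝ) ≤ (N : ℝ) := by exact_mod_cast hN
  have hC0 : (0 : ℝ) < C := lt_of_lt_of_le zero_lt_one hC1
  set S : Set (E N) :=
    {x : E N | (0 < infDist x Ω ∧ infDist x Ω < s) ∧ ∀ i, ρ + 2 * r ≤ ⟪u i, x⟫} with hS
  set Vr : ℝ := (volume (ball (0 : E N) (R + 2 * r))).toReal with hVr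
  have hVfin : volume (ball (0 : E N) (R + 2 * r)) ≠ ⊤ := measure_ball_lt_top.ne
  have hVr0 : 0 ≤ Vr := ENNReal.toReal_nonneg
  have hxnorm : ∀ x ∈ S, ‖x‖ < R + r := by
    rintro x ⟨⟨hx0, hxs⟩, hxin⟩
    obtain ⟨ω, hω, hdist⟩ := (Metric.infDist_lt_iff hΩne).1 hxs
    have hωR : ‖ω‖ < R := by
      have := hΩR hω
      simpa [mem_ball, dist_zero_right] using this
    have h1 : ω + (x - ω) = x := by abel
    have h2 : ‖x‖ ≤ ‖ω‖ + ‖x - ω‖ := by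
      conv_lhs => rw [← h1]
      exact norm_add_le _ _
    rw [dist_eq_norm] at hdist
    linarith
  have hSsub : S ⊆ ball (0 : E N) (R + 2 * r) := by
    intro x hx
    rw [mem_ball, dist_zero_right]
    have := hxnorm x hx
    linarith
  have hSmeas : MeasurableSet S := by
    have h1 : S = ({x : E N | 0 < infDist x Ω} ∩ {x : E N | infDist x Ω < s}) ∩
        ⋂ i, {x : E N | ρ + 2 * r ≤ ⟪u i, x⟫} := by
      ext x
      simp only [hS, Set.mem_setOf_eq, Set.mem_inter_iff, Set.mem_iInter]
    rw [h1]
    refine MeasurableSet.inter (MeasurableSet.inter ?_ ?_) ?_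
    · exact measurableSet_lt measurable_const (Metric.continuous_infDist_pt Ω).measurable
    · exact measurableSet_lt (Metric.continuous_infDist_pt Ω).measurable measurable_const
    · exact MeasurableSet.iInter fun i => measurableSet_le measurable_const
        ((Continuous.inner continuous_const continuous_id).measurable)
  by_cases hcase : r / (4 * N * C) < s
  · -- large s regime
    have h4NC : (0 : ℝ) < 4 * N * C := by nlinarith
    have h4 : r < 4 * N * C * s := by
      rw [div_lt_iff₀ h4NC] at hcase
      nlinarith
    calc volume S ≤ volume (ball (0 : E N) (R + 2 * r)) := measure_mono hSsub
      _ = ENNReal.ofReal Vr := (ENNReal.ofReal_toReal hVfin).symm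
      _ ≤ ENNReal.ofReal (4 * N * C * Vr / r * s) := by
          apply ENNReal.ofReal_le_ofReal
          rw [div_mul_eq_mul_div, le_div_iff₀ hr]
          nlinarith [mul_le_mul_of_nonneg_left h4.le hVr0]
  · -- small s regime
    have hsmall : s ≤ r / (4 * N * C) := not_lt.1 hcase
    set η : ℝ := C * s with hη
    have hηpos : 0 < η := by positivity
    set a : E N := ∑ j, u j with ha
    have hanorm : ‖a‖ ≤ (N : ℝ) := by
      rw [ha]
      calc ‖∑ j, u j‖ ≤ ∑ j : Fin N, ‖u j‖ := norm_sum_le _ _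
        _ = ∑ j : Fin N, 1 := by
            exact Finset.sum_congr rfl fun j _ => hunit _ (hu j)
        _ = (N : ℝ) := by simp
    set K : ℕ := ⌊r / (2 * N * C * s)⌋₊ with hK
    have hdenpos : (0 : ℝ) < 2 * N * C * s := by nlinarith
    have hK1 : (K : ℝ) ≤ r / (2 * N * C * s) := Nat.floor_le (by positivity)
    have hK2 : r / (2 * N * C * s) < (K : ℝ) + 1 := Nat.lt_floor_add_one _
    have hNCs : (N : ℝ) * C * s ≤ r / 4 := by
      have h1 : (N : ℝ) * C * s ≤ N * C * (r / (4 * N * C)) := by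
        apply mul_le_mul_of_nonneg_left hsmall (by nlinarith)
      have h2 : (N : ℝ) * C * (r / (4 * N * C)) = r / 4 := by
        field_simp
      linarith
    have hNKsum : (N : ℝ) * (((K : ℝ) + 1) * η) ≤ 3 * r / 4 := by
      have h1 : (N : ℝ) * ((K : ℝ) * η) ≤ N * ((r / (2 * N * C * s)) * η) := by
        apply mul_le_mul_of_nonneg_left _ (by linarith)
        apply mul_le_mul_of_nonneg_right hK1 hηpos.le
      have h2 : (N : ℝ) * ((r / (2 * N * C * s)) * η) = r / 2 := by
        rw [hη]
        field_simp
      have h3 : (N : ℝ) * (((K : ℝ) + 1) * η) = N * ((K : ℝ) * η) + N * η := by ring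
      have h4 : (N : ℝ) * η ≤ r / 4 := by rw [hη]; nlinarith [hNCs]
      linarith
    -- key step: translated points are in Ω
    have key : ∀ x ∈ S, ∀ m : ℕ, 1 ≤ m → m ≤ K → x - ((m : ℝ) * η) • a ∈ Ω := by
      rintro x ⟨⟨hx0, hxs⟩, hxin⟩ m hm1 hmK
      obtain ⟨ω, hω, hdist⟩ := (Metric.infDist_lt_iff hΩne).1 hxs
      set δ : E N := ω - x with hδ
      have hδn : ‖δ‖ < s := by
        rw [hδ, norm_sub_rev]
        rwa [dist_eq_norm] at hdist
      obtain ⟨d, hd⟩ := hrepr δ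
      have hdb : ∀ i, |d i| < η := by
        intro i
        have h1 := hcoord d i
        rw [← hd] at h1
        calc |d i| ≤ C * ‖δ‖ := h1
          _ < C * s := by exact mul_lt_mul_of_pos_left hδn hC0
          _ = η := hη.symm
      set t : Fin N → ℝ := fun i => (m : ℝ) * η + d i with ht
      have hm1' : (1 : ℝ) ≤ (m : ℝ) := by exact_mod_cast hm1
      have htnn : ∀ i, 0 ≤ t i := by
        intro i
        have h1 := (abs_lt.1 (hdb i)).1
        rw [ht]
        dsimp only
        nlinarith
      have hti : ∀ i, t i ≤ ((m : ℝ) + 1) * η := by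
        intro i
        have h1 := (abs_lt.1 (hdb i)).2
        rw [ht]
        dsimp only
        nlinarith
      have hsum_t : ∑ i, t i ≤ 3 * r / 4 := by
        have h1 : ∑ i, t i ≤ ∑ _i : Fin N, ((m : ℝ) + 1) * η :=
          Finset.sum_le_sum fun i _ => hti i
        have h2 : ∑ _i : Fin N, ((m : ℝ) + 1) * η = (N : ℝ) * (((m : ℝ) + 1) * η) := by
          rw [Finset.sum_const, Finset.card_univ, Fintype.card_fin, nsmul_eq_mul]
        have hmK' : (m : ℝ) ≤ (K : ℝ) := by exact_mod_cast hmK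
        have h3 : (N : ℝ) * (((m : ℝ) + 1) * η) ≤ (N : ℝ) * (((K : ℝ) + 1) * η) := by
          apply mul_le_mul_of_nonneg_left _ (by linarith)
          nlinarith
        linarith [hNKsum]
      have heq : x - ((m : ℝ) * η) • a = ω - ∑ i, t i • u i := by
        have h1 : ∑ i, t i • u i = ((m : ℝ) * η) • a + δ := by
          rw [ht, hd, ha]
          simp only [add_smul]
          rw [Finset.sum_add_distrib, Finset.smul_sum]
        rw [h1, hδ]
        abel
      rw [heq]
      apply cone_sub hRP hunit u hu t htnn Finset.univ ω hω
      intro j _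
      have hx_j : ρ + 2 * r ≤ ⟪u j, x⟫ := hxin j
      have hδj : |⟪u j, δ⟫| ≤ ‖δ‖ := by
        have h1 := abs_real_inner_le_norm (u j) δ
        rw [hunit _ (hu j), one_mul] at h1
        exact h1
      have homega : ⟪ω, u j⟫ = ⟪u j, x⟫ + ⟪u j, δ⟫ := by
        rw [real_inner_comm, ← inner_add_right]
        congr 1
        rw [hδ]
        abel
      have h2 := (abs_le.1 hδj).1
      rw [homega]
      linarith
    -- translates
    set T : ℕ → Set (E N) := fun k => (fun y => y + ((k : ℝ) * η) • a) ⁻¹' S with hT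
    have hTmeas : ∀ k, MeasurableSet (T k) := by
      intro k
      exact hSmeas.preimage (measurable_add_const _)
    have hTvol : ∀ k, volume (T k) = volume S := by
      intro k
      exact measure_preimage_add_right volume _ S
    have aux : ∀ k k' : ℕ, k < k' → k' ≤ K → Disjoint (T k) (T k') := by
      intro k k' hkk' hk'K
      rw [Set.disjoint_left]
      intro y hyk hyk'
      simp only [hT, Set.mem_preimage] at hyk hyk'
      have hmkey := key _ hyk' (k' - k) (by omega) (le_trans (Nat.sub_le _ _) hk'K)
      have heq : y + ((k' : ℝ) * η) • a - (((k' - k : ℕ) : ℝ) * η) • a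
          = y + ((k : ℝ) * η) • a := by
        have hcast : ((k' - k : ℕ) : ℝ) = (k' : ℝ) - (k : ℝ) := by
          rw [Nat.cast_sub hkk'.le]
        rw [hcast, add_sub_assoc, ← sub_smul]
        congr 2
        ring
      rw [heq] at hmkey
      have hpos : 0 < infDist (y + ((k : ℝ) * η) • a) Ω := hyk.1.1
      rw [infDist_zero_of_mem hmkey] at hpos
      exact lt_irrefl 0 hpos
    have hTdisj : (↑(Finset.range (K + 1)) : Set ℕ).PairwiseDisjoint T := by
      intro k hk k' hk' hne
      simp only [Finset.coe_range, Set.mem_Iio] at hk hk'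
      rcases lt_or_gt_of_ne hne with h | h
      · exact aux k k' h (by omega)
      · exact (aux k' k h (by omega)).symm
    have hTsub : ∀ k ∈ Finset.range (K + 1), T k ⊆ ball (0 : E N) (R + 2 * r) := by
      intro k hk y hy
      simp only [hT, Set.mem_preimage] at hy
      set x := y + ((k : ℝ) * η) • a with hx
      have hkK : (k : ℝ) ≤ (K : ℝ) := by
        have : k ≤ K := by
          simpa using Nat.lt_succ_iff.1 (Finset.mem_range.1 hk)
        exact_mod_cast this
      have hsmul : ‖((k : ℝ) * η) • a‖ ≤ r / 2 := by
        rw [norm_smul, Real.norm_eq_abs, abs_of_nonneg (by positivity)]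
        have h1 : (k : ℝ) * η * ‖a‖ ≤ ((r / (2 * N * C * s)) * η) * (N : ℝ) := by
          apply mul_le_mul
          · apply mul_le_mul_of_nonneg_right (le_trans hkK hK1) hηpos.le
          · exact hanorm
          · exact norm_nonneg _
          · positivity
        have h2 : ((r / (2 * N * C * s)) * η) * (N : ℝ) = r / 2 := by
          rw [hη]
          field_simp
        linarith
      have hxn : ‖x‖ < R + r := hxnorm x hy
      have hyn : ‖y‖ ≤ ‖x‖ + ‖((k : ℝ) * η) • a‖ := by
        have h1 : y = x - ((k : ℝ) * η) • a := by rw [hx]; abel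
        rw [h1]
        exact norm_sub_le _ _
      rw [mem_ball, dist_zero_right]
      linarith
    set κ : ENNReal := ((K + 1 : ℕ) : ENNReal) with hκ
    have hsum : κ * volume S ≤ volume (ball (0 : E N) (R + 2 * r)) := by
      have h1 : ∑ k ∈ Finset.range (K + 1), volume (T k) = κ * volume S := by
        rw [Finset.sum_congr rfl fun k _ => hTvol k, Finset.sum_const,
          Finset.card_range, nsmul_eq_mul, hκ]
      have h2 := measure_biUnion_finset (μ := volume) hTdisj fun k _ => hTmeas k
      rw [← h1, ← h2]
      exact measure_mono (Set.iUnion₂_subset hTsub)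
    have htgt0 : (0 : ℝ) ≤ 4 * N * C * Vr / r * s := by positivity
    have htarget : volume (ball (0 : E N) (R + 2 * r))
        ≤ κ * ENNReal.ofReal (4 * N * C * Vr / r * s) := by
      have hreal : Vr ≤ ((K + 1 : ℕ) : ℝ) * (4 * N * C * Vr / r * s) := by
        have hcst : ((K + 1 : ℕ) : ℝ) = (K : ℝ) + 1 := by push_cast; ring
        have h5 : r / (2 * N * C * s) * (4 * N * C * Vr / r * s) = 2 * Vr := by
          field_simp
          ring
        have h6 : r / (2 * N * C * s) * (4 * N * C * Vr / r * s)
            ≤ ((K : ℝ) + 1) * (4 * N * C * Vr / r * s) :=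
          mul_le_mul_of_nonneg_right hK2.le htgt0
        rw [hcst]
        linarith
      calc volume (ball (0 : E N) (R + 2 * r)) = ENNReal.ofReal Vr :=
            (ENNReal.ofReal_toReal hVfin).symm
        _ ≤ ENNReal.ofReal (((K + 1 : ℕ) : ℝ) * (4 * N * C * Vr / r * s)) :=
            ENNReal.ofReal_le_ofReal hreal
        _ = ENNReal.ofReal ((K + 1 : ℕ) : ℝ) * ENNReal.ofReal (4 * N * C * Vr / r * s) :=
            ENNReal.ofReal_mul (by positivity)
        _ = κ * ENNReal.ofReal (4 * N * C * Vr / r * s) := by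
            rw [hκ, ENNReal.ofReal_natCast]
    have hfinal := le_trans hsum htarget
    have hKne : κ ≠ 0 := by
      rw [hκ]
      exact_mod_cast Nat.succ_ne_zero K
    have hKtop : κ ≠ ⊤ := by rw [hκ]; exact ENNReal.natCast_ne_top _
    exact (ENNReal.mul_le_mul_iff_right hKne hKtop).1 hfinal
set_option maxHeartbeats 1000000 in
theorem outer_neighborhood_volume (N : ℕ) (hN : 1 ≤ N) (P : Set (E N))
    (hP : IsRootSystem P) (hEA : CondEA P) (ρ r R : ℝ) (hρ : 0 ≤ ρ)
    (hr : 0 < r) (hR : 0 < R) :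
    ∃ c > 0, ∀ Ω : Set (E N), IsOpen Ω → ReflProp P ρ Ω →
      ball (0 : E N) ((sigma1 P)⁻¹ * sigma2 P * (ρ + 2 * r)) ⊆ Ω →
      Ω ⊆ ball (0 : E N) R →
      ∀ s : ℝ, 0 < s → s < r →
        volume {x : E N | 0 < infDist x Ω ∧ infDist x Ω < s} ≤ ENNReal.ofReal (c * s) := by
  classical
  have hN1 : (1 : ℝ) ≤ (N : ℝ) := by exact_mod_cast hN
  haveI : Nonempty (Fin N) := Fin.pos_iff_nonempty.1 (by omega)
  set F_P : Finset (E N) := hP.1.toFinset with hF_P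
  set 𝔘 : Finset (Fin N → E N) :=
    (Fintype.piFinset fun _ : Fin N => F_P).filter (fun u => LinearIndependent ℝ u) with h𝔘
  set Cfun : (Fin N → E N) → ℝ := fun u =>
    if h : LinearIndependent ℝ u then (coordBound hN h).choose else 1 with hCfun
  have hCfun1 : ∀ u, 1 ≤ Cfun u := by
    intro u
    rw [hCfun]
    dsimp only
    split_ifs with h
    · exact (coordBound hN h).choose_spec.1
    · exact le_refl 1
  have hCfun_spec : ∀ (u : Fin N → E N), LinearIndependent ℝ u →
      ∀ (d : Fin N → ℝ), ∀ i, |d i| ≤ Cfun u * ‖∑ j, d j • u j‖ := by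
    intro u h d i
    rw [hCfun]
    dsimp only
    rw [dif_pos h]
    exact (coordBound hN h).choose_spec.2 d i
  set Vr : ℝ := (volume (ball (0 : E N) (R + 2 * r))).toReal with hVr
  have hVr0 : 0 ≤ Vr := ENNReal.toReal_nonneg
  have hterm0 : ∀ u, 0 ≤ 4 * N * Cfun u * Vr / r := by
    intro u
    have h1 := hCfun1 u
    apply div_nonneg _ hr.le
    have h2 : (0:ℝ) ≤ (N:ℝ) := by linarith
    have h3 : (0:ℝ) ≤ Cfun u := by linarith
    exact mul_nonneg (mul_nonneg (mul_nonneg (by norm_num) h2) h3) hVr0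
  set c : ℝ := (∑ u ∈ 𝔘, 4 * N * Cfun u * Vr / r) + 1 with hc
  have hcsum0 : 0 ≤ ∑ u ∈ 𝔘, 4 * N * Cfun u * Vr / r :=
    Finset.sum_nonneg fun u _ => hterm0 u
  have hc0 : 0 < c := by rw [hc]; linarith
  refine ⟨c, hc0, ?_⟩
  intro Ω hΩopen hRP hball hΩR s hs0 hsr
  have hσ1pos : 0 < sigma1 P := sigma1_pos hN hP hEA
  have hσ2ge1 : 1 ≤ sigma2 P := sigma2_ge_one hN hP hEA
  have hrad : 0 < (sigma1 P)⁻¹ * sigma2 P * (ρ + 2 * r) := by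
    apply mul_pos (mul_pos (inv_pos.2 hσ1pos) (by linarith)) (by linarith)
  have hΩne : Ω.Nonempty := ⟨0, hball (mem_ball_self hrad)⟩
  have hcover : {x : E N | 0 < infDist x Ω ∧ infDist x Ω < s} ⊆
      ⋃ u ∈ 𝔘, {x : E N | (0 < infDist x Ω ∧ infDist x Ω < s) ∧
        ∀ i, ρ + 2 * r ≤ ⟪u i, x⟫} := by
    rintro x ⟨hx0, hxs⟩
    have hxnot : x ∉ Ω := by
      intro h
      rw [infDist_zero_of_mem h] at hx0
      exact lt_irrefl 0 hx0
    have hxrad : (sigma1 P)⁻¹ * sigma2 P * (ρ + 2 * r) ≤ ‖x‖ := by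
      by_contra h
      push_neg at h
      exact hxnot (hball (by rwa [mem_ball, dist_zero_right]))
    obtain ⟨u, huP, huind, huin⟩ := claimH hN hP hEA hρ hr hxrad
    have hu𝔘 : u ∈ 𝔘 := by
      rw [h𝔘]
      refine Finset.mem_filter.2 ⟨Fintype.mem_piFinset.2 fun i => ?_, huind⟩
      rw [hF_P]
      exact hP.1.mem_toFinset.2 (huP i)
    exact Set.mem_biUnion hu𝔘 ⟨⟨hx0, hxs⟩, huin⟩
  calc volume {x : E N | 0 < infDist x Ω ∧ infDist x Ω < s}
      ≤ volume (⋃ u ∈ 𝔘, {x : E N | (0 < infDist x Ω ∧ infDist x Ω < s) ∧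
          ∀ i, ρ + 2 * r ≤ ⟪u i, x⟫}) := measure_mono hcover
    _ ≤ ∑ u ∈ 𝔘, volume {x : E N | (0 < infDist x Ω ∧ infDist x Ω < s) ∧
          ∀ i, ρ + 2 * r ≤ ⟪u i, x⟫} := measure_biUnion_finset_le 𝔘 _
    _ ≤ ∑ u ∈ 𝔘, ENNReal.ofReal (4 * N * Cfun u * Vr / r * s) := by
        apply Finset.sum_le_sum
        intro u hu
        rw [h𝔘, Finset.mem_filter] at hu
        obtain ⟨hupi, huind⟩ := hu
        have huP : ∀ i, u i ∈ P := by
          intro i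
          have := Fintype.mem_piFinset.1 hupi i
          rw [hF_P] at this
          exact hP.1.mem_toFinset.1 this
        have hspan : Submodule.span ℝ (Set.range u) = ⊤ :=
          LinearIndependent.span_eq_top_of_card_eq_finrank huind
            (by rw [Fintype.card_fin, finrank_euclideanSpace_fin])
        have hrepr : ∀ z : E N, ∃ d : Fin N → ℝ, z = ∑ j, d j • u j := by
          intro z
          have hz : z ∈ Submodule.span ℝ (Set.range u) := by rw [hspan]; trivial
          rw [Submodule.mem_span_range_iff_exists_fun] at hz
          obtain ⟨d, hd⟩ := hz
          exact ⟨d, hd.symm⟩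
        exact core_bound hN hRP hΩR hΩne hP.2.1 hρ hr huP (hCfun1 u)
          (hCfun_spec u huind) hrepr hs0 hsr
    _ = ENNReal.ofReal (∑ u ∈ 𝔘, 4 * N * Cfun u * Vr / r * s) := by
        rw [ENNReal.ofReal_sum_of_nonneg fun u _ => mul_nonneg (hterm0 u) hs0.le]
    _ ≤ ENNReal.ofReal (c * s) := by
        apply ENNReal.ofReal_le_ofReal
        rw [← Finset.sum_mul, hc]
        nlinarith
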